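/- Let m < n, q ≥ 1. Let A ∈ M_{m×n}(ℝ) have full row rank, f ∈ ℝⁿ and c ∈ ℝᵐ satisfy A f = −c. Suppose (A_τ)_{τ>0}, (f_τ)_{τ>0}, (c_τ)_{τ>0} are families of matrices and vectors satisfying ‖A_τ − A‖ ≤ K₁ τ^q, ‖f_τ − f‖₂ ≤ K₂ τ^q and ‖c_τ − c‖₂ ≤ K₃ τ^q for all τ > 0, with constants K₁, K₂, K₃ > 0 independent of τ. Then there exist τ₀ > 0 and C > 0 independent of τ such that for all 0 < τ < τ₀: A_τ A_τᵀ is invertible, the Minimal ℓ² Norm DMM vector f_MN^τ := f_τ − A_τ⁺ (A_τ f_τ + c_τ) with A_τ⁺ := A_τᵀ(A_τ A_τᵀ)⁻¹ satisfies ‖f_MN^τ − f‖₂ ≤ C τ^q, and moreover ‖A_τ f_MN^τ + c‖₂ ≤ C τ^q. -/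

import Mathlib

open scoped Matrix Matrix.Norms.L2Operator

/-- The Euclidean (ℓ²) norm of a vector in `Fin k → ℝ`. -/
noncomputable def euclNorm {k : ℕ} (v : Fin k → ℝ) : ℝ :=
  ‖(EuclideanSpace.equiv (Fin k) ℝ).symm v‖

lemma isUnit_of_rank_eq_card {k : ℕ} (B : Matrix (Fin k) (Fin k) ℝ) (h : B.rank = k) :
    IsUnit B := by
  rw [← Matrix.mulVec_surjective_iff_isUnit]
  have hr : LinearMap.range B.mulVecLin = ⊤ := by
    apply Submodule.eq_top_of_finrank_eq
    rw [← Matrix.rank, h, Module.finrank_fin_fun]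
  intro y
  have := LinearMap.range_eq_top.mp hr y
  simpa [Matrix.mulVecLin] using this

lemma isBBM_mul {a b c : ℕ} :
    IsBoundedBilinearMap ℝ
      (fun p : Matrix (Fin a) (Fin b) ℝ × Matrix (Fin b) (Fin c) ℝ => p.1 * p.2) where
  add_left x₁ x₂ y := Matrix.add_mul x₁ x₂ y
  smul_left r x y := Matrix.smul_mul r x y
  add_right x y₁ y₂ := Matrix.mul_add x y₁ y₂
  smul_right r x y := Matrix.mul_smul x r y
  bound := ⟨1, one_pos, fun x y => by simpa using Matrix.l2_opNorm_mul x y⟩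

noncomputable def mulVecE {a b : ℕ} (M : Matrix (Fin a) (Fin b) ℝ)
    (v : EuclideanSpace ℝ (Fin b)) : EuclideanSpace ℝ (Fin a) :=
  (EuclideanSpace.equiv (Fin a) ℝ).symm (M *ᵥ v)

lemma mulVecE_eq {a b : ℕ} (M : Matrix (Fin a) (Fin b) ℝ) (v : EuclideanSpace ℝ (Fin b)) :
    mulVecE M v = Matrix.toEuclideanLin M v := rfl

lemma isBBM_mulVecE {a b : ℕ} :
    IsBoundedBilinearMap ℝ
      (fun p : Matrix (Fin a) (Fin b) ℝ × EuclideanSpace ℝ (Fin b) => mulVecE p.1 p.2) where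
  add_left x₁ x₂ y := by simp [mulVecE_eq, map_add]
  smul_left r x y := by simp [mulVecE_eq, map_smul]
  add_right x y₁ y₂ := by simp [mulVecE_eq, map_add]
  smul_right r x y := by simp [mulVecE_eq, map_smul]
  bound := ⟨1, one_pos, fun x y => by rw [one_mul]; exact Matrix.l2_opNorm_mulVec x y⟩

/-- The MN-DMM map as a function of the data `(B, g, d)`. -/
noncomputable def PhiMN (m n : ℕ)
    (x : Matrix (Fin m) (Fin n) ℝ × EuclideanSpace ℝ (Fin n) × EuclideanSpace ℝ (Fin m)) :
    EuclideanSpace ℝ (Fin n) :=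
  x.2.1 - mulVecE (x.1ᵀ * (x.1 * x.1ᵀ)⁻¹) (mulVecE x.1 x.2.1 + x.2.2)

noncomputable def transCLM (a b : ℕ) :
    Matrix (Fin a) (Fin b) ℝ →L[ℝ] Matrix (Fin b) (Fin a) ℝ :=
  LinearMap.toContinuousLinearMap (Matrix.transposeLinearEquiv (Fin a) (Fin b) ℝ ℝ).toLinearMap

lemma contDiff_sq {m n : ℕ} :
    ContDiff ℝ 1 (fun x : Matrix (Fin m) (Fin n) ℝ × EuclideanSpace ℝ (Fin n) ×
      EuclideanSpace ℝ (Fin m) => x.1 * x.1ᵀ) := by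
  have hT : ContDiff ℝ 1 (fun x : Matrix (Fin m) (Fin n) ℝ × EuclideanSpace ℝ (Fin n) ×
      EuclideanSpace ℝ (Fin m) => x.1ᵀ) := by
    have := (transCLM m n).contDiff (n := 1)
    exact this.comp contDiff_fst
  exact isBBM_mul.contDiff.comp (contDiff_fst.prodMk hT)

lemma contDiffAt_PhiMN {m n : ℕ}
    (x₀ : Matrix (Fin m) (Fin n) ℝ × EuclideanSpace ℝ (Fin n) × EuclideanSpace ℝ (Fin m))
    (hU : IsUnit (x₀.1 * x₀.1ᵀ)) :
    ContDiffAt ℝ 1 (PhiMN m n) x₀ := by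
  have hT : ContDiff ℝ 1 (fun x : Matrix (Fin m) (Fin n) ℝ × EuclideanSpace ℝ (Fin n) ×
      EuclideanSpace ℝ (Fin m) => x.1ᵀ) := ((transCLM m n).contDiff).comp contDiff_fst
  have hS := contDiff_sq (m := m) (n := n)
  have hinv : ContDiffAt ℝ 1 (fun x : Matrix (Fin m) (Fin n) ℝ × EuclideanSpace ℝ (Fin n) ×
      EuclideanSpace ℝ (Fin m) => (x.1 * x.1ᵀ)⁻¹) x₀ := by
    have he : (fun x : Matrix (Fin m) (Fin n) ℝ × EuclideanSpace ℝ (Fin n) ×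
        EuclideanSpace ℝ (Fin m) => (x.1 * x.1ᵀ)⁻¹)
        = fun x => Ring.inverse (x.1 * x.1ᵀ) :=
      funext fun x => Matrix.nonsing_inv_eq_ringInverse _
    rw [he]
    have h0 : ContDiffAt ℝ 1 (Ring.inverse (M₀ := Matrix (Fin m) (Fin m) ℝ)) (x₀.1 * x₀.1ᵀ) := by
      have := contDiffAt_ringInverse ℝ (n := 1) hU.unit
      simpa using this
    exact h0.comp x₀ hS.contDiffAt
  have hP : ContDiffAt ℝ 1 (fun x : Matrix (Fin m) (Fin n) ℝ × EuclideanSpace ℝ (Fin n) ×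
      EuclideanSpace ℝ (Fin m) => x.1ᵀ * (x.1 * x.1ᵀ)⁻¹) x₀ :=
    isBBM_mul.contDiff.comp_contDiffAt x₀ (hT.contDiffAt.prodMk hinv)
  have hr : ContDiff ℝ 1 (fun x : Matrix (Fin m) (Fin n) ℝ × EuclideanSpace ℝ (Fin n) ×
      EuclideanSpace ℝ (Fin m) => mulVecE x.1 x.2.1 + x.2.2) := by
    have h1 : ContDiff ℝ 1 (fun x : Matrix (Fin m) (Fin n) ℝ × EuclideanSpace ℝ (Fin n) ×
        EuclideanSpace ℝ (Fin m) => mulVecE x.1 x.2.1) :=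
      isBBM_mulVecE.contDiff.comp (contDiff_fst.prodMk (contDiff_fst.comp contDiff_snd))
    exact h1.add (contDiff_snd.comp contDiff_snd)
  have hbig : ContDiffAt ℝ 1 (fun x : Matrix (Fin m) (Fin n) ℝ × EuclideanSpace ℝ (Fin n) ×
      EuclideanSpace ℝ (Fin m) =>
      mulVecE (x.1ᵀ * (x.1 * x.1ᵀ)⁻¹) (mulVecE x.1 x.2.1 + x.2.2)) x₀ :=
    isBBM_mulVecE.contDiff.comp_contDiffAt x₀ (hP.prodMk hr.contDiffAt)
  exact ((contDiff_fst.comp contDiff_snd).contDiffAt (n := 1)).sub hbig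

set_option maxHeartbeats 1000000 in
theorem mn_dmm_consistency {m n : ℕ} (hmn : m < n) (q : ℕ) (hq : 1 ≤ q)
    (A : Matrix (Fin m) (Fin n) ℝ) (hA : A.rank = m)
    (f : Fin n → ℝ) (c : Fin m → ℝ) (hfc : A.mulVec f = -c)
    (K₁ K₂ K₃ : ℝ) (hK₁ : 0 < K₁) (hK₂ : 0 < K₂) (hK₃ : 0 < K₃)
    (Aτ : ℝ → Matrix (Fin m) (Fin n) ℝ)
    (fτ : ℝ → Fin n → ℝ) (cτ : ℝ → Fin m → ℝ)
    (hAτ : ∀ τ : ℝ, 0 < τ → ‖Aτ τ - A‖ ≤ K₁ * τ ^ q)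
    (hfτ : ∀ τ : ℝ, 0 < τ → euclNorm (fτ τ - f) ≤ K₂ * τ ^ q)
    (hcτ : ∀ τ : ℝ, 0 < τ → euclNorm (cτ τ - c) ≤ K₃ * τ ^ q) :
    ∃ τ₀ > (0 : ℝ), ∃ C > (0 : ℝ), ∀ τ : ℝ, 0 < τ → τ < τ₀ →
      IsUnit (Aτ τ * (Aτ τ)ᵀ) ∧
      euclNorm ((fτ τ - ((Aτ τ)ᵀ * (Aτ τ * (Aτ τ)ᵀ)⁻¹).mulVec
          ((Aτ τ).mulVec (fτ τ) + cτ τ)) - f) ≤ C * τ ^ q ∧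
      euclNorm ((Aτ τ).mulVec (fτ τ - ((Aτ τ)ᵀ * (Aτ τ * (Aτ τ)ᵀ)⁻¹).mulVec
          ((Aτ τ).mulVec (fτ τ) + cτ τ)) + c) ≤ C * τ ^ q := by
  classical
  set ιn := (EuclideanSpace.equiv (Fin n) ℝ).symm with hιn
  set ιm := (EuclideanSpace.equiv (Fin m) ℝ).symm with hιm
  set x₀ : Matrix (Fin m) (Fin n) ℝ × EuclideanSpace ℝ (Fin n) × EuclideanSpace ℝ (Fin m) :=
    (A, ιn f, ιm c) with hx₀
  have hUnit : IsUnit (A * Aᵀ) := by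
    apply isUnit_of_rank_eq_card
    rw [Matrix.rank_self_mul_transpose, hA]
  obtain ⟨K, t, ht, hL⟩ := (contDiffAt_PhiMN x₀ hUnit).exists_lipschitzOnWith
  have hUopen : IsOpen {x : Matrix (Fin m) (Fin n) ℝ × EuclideanSpace ℝ (Fin n) ×
      EuclideanSpace ℝ (Fin m) | IsUnit (x.1 * x.1ᵀ)} :=
    Units.isOpen.preimage contDiff_sq.continuous
  have ht' : t ∩ {x | IsUnit (x.1 * x.1ᵀ)} ∈ nhds x₀ :=
    Filter.inter_mem ht (hUopen.mem_nhds hUnit)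
  obtain ⟨δ, hδ, hball⟩ := Metric.mem_nhds_iff.mp ht'
  set Kmax : ℝ := max K₁ (max K₂ K₃) with hKmaxdef
  have hKmax : 0 < Kmax := lt_max_of_lt_left hK₁
  refine ⟨min 1 (δ / (2 * Kmax)), lt_min one_pos (by positivity),
    (↑K + 1) * Kmax + K₃, by positivity, fun τ hτ hττ => ?_⟩
  have hτ1 : τ ≤ 1 := le_of_lt (lt_of_lt_of_le hττ (min_le_left _ _))
  have hτq : τ ^ q ≤ τ := by
    calc τ ^ q ≤ τ ^ 1 := pow_le_pow_of_le_one hτ.le hτ1 hq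
    _ = τ := pow_one τ
  have hτqpos : 0 < τ ^ q := pow_pos hτ q
  set xτ : Matrix (Fin m) (Fin n) ℝ × EuclideanSpace ℝ (Fin n) × EuclideanSpace ℝ (Fin m) :=
    (Aτ τ, ιn (fτ τ), ιm (cτ τ)) with hxτ
  have hd : dist xτ x₀ ≤ Kmax * τ ^ q := by
    rw [Prod.dist_eq, Prod.dist_eq]
    have h1 : dist xτ.1 x₀.1 ≤ Kmax * τ ^ q := by
      rw [dist_eq_norm]
      exact le_trans (hAτ τ hτ) (by
        have : K₁ ≤ Kmax := le_max_left _ _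
        nlinarith)
    have h2 : dist xτ.2.1 x₀.2.1 ≤ Kmax * τ ^ q := by
      rw [dist_eq_norm, show xτ.2.1 - x₀.2.1 = ιn (fτ τ - f) from (map_sub ιn _ _).symm]
      exact le_trans (hfτ τ hτ) (by
        have : K₂ ≤ Kmax := le_trans (le_max_left _ _) (le_max_right _ _)
        nlinarith)
    have h3 : dist xτ.2.2 x₀.2.2 ≤ Kmax * τ ^ q := by
      rw [dist_eq_norm, show xτ.2.2 - x₀.2.2 = ιm (cτ τ - c) from (map_sub ιm _ _).symm]
      exact le_trans (hcτ τ hτ) (by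
        have : K₃ ≤ Kmax := le_trans (le_max_right _ _) (le_max_right _ _)
        nlinarith)
    exact max_le h1 (max_le h2 h3)
  have hdlt : dist xτ x₀ < δ := by
    have h1 : Kmax * τ ^ q ≤ Kmax * τ := by nlinarith
    have h2 : τ < δ / (2 * Kmax) := lt_of_lt_of_le hττ (min_le_right _ _)
    have : Kmax * τ < δ / 2 := by
      rw [lt_div_iff₀ (by positivity)] at h2
      nlinarith
    linarith [hd]
  have hmem : xτ ∈ t ∩ {x | IsUnit (x.1 * x.1ᵀ)} := hball (Metric.mem_ball.mpr hdlt)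
  have hmem₀ : x₀ ∈ t := mem_of_mem_nhds ht
  have hunitτ : IsUnit (Aτ τ * (Aτ τ)ᵀ) := hmem.2
  have hdetτ : IsUnit (Aτ τ * (Aτ τ)ᵀ).det := (Matrix.isUnit_iff_isUnit_det _).mp hunitτ
  refine ⟨hunitτ, ?_, ?_⟩
  · -- main bound via Lipschitz
    have hPhi0 : PhiMN m n x₀ = ιn f := by
      have hzero : mulVecE A (ιn f) + ιm c = 0 := by
        show ιm (A *ᵥ f) + ιm c = 0
        rw [← map_add, show A *ᵥ f + c = 0 by rw [hfc]; simp, map_zero]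
      show ιn f - mulVecE (Aᵀ * (A * Aᵀ)⁻¹) (mulVecE A (ιn f) + ιm c) = ιn f
      rw [hzero, show mulVecE (Aᵀ * (A * Aᵀ)⁻¹) 0 = 0 by
        simp [mulVecE_eq, map_zero], sub_zero]
    have hPhiτ : PhiMN m n xτ =
        ιn (fτ τ - ((Aτ τ)ᵀ * (Aτ τ * (Aτ τ)ᵀ)⁻¹) *ᵥ ((Aτ τ) *ᵥ (fτ τ) + cτ τ)) := rfl
    have hnorm : euclNorm ((fτ τ - ((Aτ τ)ᵀ * (Aτ τ * (Aτ τ)ᵀ)⁻¹).mulVec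
        ((Aτ τ).mulVec (fτ τ) + cτ τ)) - f) = dist (PhiMN m n xτ) (PhiMN m n x₀) := by
      rw [dist_eq_norm, hPhiτ, hPhi0, ← map_sub]
      rfl
    rw [hnorm]
    calc dist (PhiMN m n xτ) (PhiMN m n x₀) ≤ K * dist xτ x₀ :=
          hL.dist_le_mul xτ hmem.1 x₀ hmem₀
      _ ≤ K * (Kmax * τ ^ q) := mul_le_mul_of_nonneg_left hd K.coe_nonneg
      _ ≤ ((↑K + 1) * Kmax + K₃) * τ ^ q := by nlinarith [K.coe_nonneg, hτqpos]
  · -- residual bound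
    have key : (Aτ τ) *ᵥ (fτ τ - ((Aτ τ)ᵀ * (Aτ τ * (Aτ τ)ᵀ)⁻¹) *ᵥ
        ((Aτ τ) *ᵥ (fτ τ) + cτ τ)) + c = c - cτ τ := by
      rw [Matrix.mulVec_sub, Matrix.mulVec_mulVec, ← Matrix.mul_assoc,
        Matrix.mul_nonsing_inv _ hdetτ, Matrix.one_mulVec]
      abel
    rw [key, show euclNorm (c - cτ τ) = euclNorm (cτ τ - c) by
      unfold euclNorm
      rw [show c - cτ τ = -(cτ τ - c) by abel, map_neg, norm_neg]]
    refine le_trans (hcτ τ hτ) ?_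
    nlinarith [mul_nonneg (mul_nonneg (by positivity : (0:ℝ) ≤ (K:ℝ)+1) hKmax.le) hτqpos.le]
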